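/- For the efficiency function μ(τ,s) = ∫ĉ_i(τ,s)di in the salience model, the partial derivatives satisfy ∂μ/∂s = -sτ²εz̄/(1-sτ) < 0 and ∂μ/∂τ = -s²τεz̄/(1-sτ) < 0, whenever τ > 0, s ∈ (0,1], sτ < 1, and z̄ > 0. -/

import Mathlib

/-- For the efficiency function `μ(τ,s) = ∫ ĉᵢ(τ,s) di`,
`∂μ/∂s = -sτ²εz̄/(1-sτ) < 0` and `∂μ/∂τ = -s²τεz̄/(1-sτ) < 0` whenever `τ > 0`,
`s ∈ (0,1]`, `sτ < 1`, and `z̄ = W̄(1-sτ)^ε > 0`. -/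
theorem stmt11 (ε : ℝ) (hε : 0 < ε)
    (wfun : ℝ → ℝ) (hw : ∀ i, 0 < wfun i) (hmono : Monotone wfun)
    (Wbar : ℝ) (hW : Wbar = ∫ j in (0:ℝ)..1, wfun j ^ (1 + ε)) (hWpos : 0 < Wbar)
    (chat : ℝ → ℝ → ℝ → ℝ)
    (hchat : ∀ i τ s, chat i τ s =
      (1 - s * τ) ^ ε *
        ((1 - τ * (1 + ε * (1 - s))) / (1 + ε) * wfun i ^ (1 + ε) + τ * Wbar))
    (μ : ℝ → ℝ → ℝ)
    (hμ : ∀ τ s, μ τ s = ∫ i in (0:ℝ)..1, chat i τ s) :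
    ∀ τ s : ℝ, 0 < τ → 0 < s → s ≤ 1 → s * τ < 1 →
      (HasDerivAt (fun s' => μ τ s')
        (-(s * τ ^ 2 * ε * (Wbar * (1 - s * τ) ^ ε)) / (1 - s * τ)) s ∧
       -(s * τ ^ 2 * ε * (Wbar * (1 - s * τ) ^ ε)) / (1 - s * τ) < 0) ∧
      (HasDerivAt (fun τ' => μ τ' s)
        (-(s ^ 2 * τ * ε * (Wbar * (1 - s * τ) ^ ε)) / (1 - s * τ)) τ ∧
       -(s ^ 2 * τ * ε * (Wbar * (1 - s * τ) ^ ε)) / (1 - s * τ) < 0) := by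
  -- integrability of w^(1+ε)
  have hint : IntervalIntegrable (fun i => wfun i ^ (1 + ε)) MeasureTheory.volume 0 1 := by
    have hm : Monotone (fun i => wfun i ^ (1 + ε)) := by
      intro a b hab
      exact Real.rpow_le_rpow (hw a).le (hmono hab) (by positivity)
    exact hm.intervalIntegrable
  have hεne : (1 : ℝ) + ε ≠ 0 := by positivity
  -- closed form for μ
  have key : ∀ τ s : ℝ, μ τ s = (1 - s * τ) ^ ε * (Wbar * (1 + τ * ε * s) / (1 + ε)) := by
    intro τ s
    rw [hμ]
    have : (fun i => chat i τ s)
        = fun i => ((1 - s * τ) ^ ε * ((1 - τ * (1 + ε * (1 - s))) / (1 + ε)))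
            * wfun i ^ (1 + ε) + (1 - s * τ) ^ ε * (τ * Wbar) := by
      funext i; rw [hchat]; ring
    rw [intervalIntegral.integral_congr (g := fun i =>
        ((1 - s * τ) ^ ε * ((1 - τ * (1 + ε * (1 - s))) / (1 + ε)))
            * wfun i ^ (1 + ε) + (1 - s * τ) ^ ε * (τ * Wbar))
        (fun i _ => by rw [hchat]; ring)]
    rw [intervalIntegral.integral_add (hint.const_mul _) intervalIntegrable_const,
      intervalIntegral.integral_const_mul, intervalIntegral.integral_const, ← hW]
    field_simp
    ring
  intro τ s hτ hs hs1 hsτ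
  have hpos : 0 < 1 - s * τ := by linarith
  have hne : (1 - s * τ) ≠ 0 := ne_of_gt hpos
  have hzpos : 0 < Wbar * (1 - s * τ) ^ ε := by positivity
  have hsub : (1 - s * τ) ^ (ε - 1) = (1 - s * τ) ^ ε / (1 - s * τ) := by
    rw [Real.rpow_sub hpos, Real.rpow_one]
  constructor
  · constructor
    · rw [show (fun s' => μ τ s') = fun s' =>
        (1 - s' * τ) ^ ε * (Wbar * (1 + τ * ε * s') / (1 + ε)) from funext fun s' => key τ s']
      have h1 : HasDerivAt (fun s' : ℝ => (1 - s' * τ) ^ ε)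
          ((-τ) * ε * (1 - s * τ) ^ (ε - 1)) s := by
        have hl : HasDerivAt (fun s' : ℝ => 1 - s' * τ) (-τ) s := by
          simpa using ((hasDerivAt_id s).mul_const τ).const_sub 1
        exact hl.rpow_const (Or.inl hne)
      have h2 : HasDerivAt (fun s' : ℝ => Wbar * (1 + τ * ε * s') / (1 + ε))
          (Wbar * (τ * ε) / (1 + ε)) s := by
        have : HasDerivAt (fun s' : ℝ => 1 + τ * ε * s') (τ * ε) s := by
          simpa using (((hasDerivAt_id s).const_mul (τ * ε)).const_add 1)
        simpa [mul_div_assoc] using ((this.const_mul Wbar).div_const (1 + ε))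
      have := h1.mul h2
      refine this.congr_deriv ?_
      rw [hsub]
      have hne' : 1 - τ * s ≠ 0 := by rwa [mul_comm]
      field_simp
      ring
    · apply div_neg_of_neg_of_pos _ hpos
      simp only [neg_neg, Left.neg_neg_iff]
      positivity
  · constructor
    · rw [show (fun τ' => μ τ' s) = fun τ' =>
        (1 - s * τ') ^ ε * (Wbar * (1 + τ' * ε * s) / (1 + ε)) from funext fun τ' => key τ' s]
      have h1 : HasDerivAt (fun τ' : ℝ => (1 - s * τ') ^ ε)
          ((-s) * ε * (1 - s * τ) ^ (ε - 1)) τ := by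
        have hl : HasDerivAt (fun τ' : ℝ => 1 - s * τ') (-s) τ := by
          simpa using ((hasDerivAt_id τ).const_mul s).const_sub 1
        exact hl.rpow_const (Or.inl hne)
      have h2 : HasDerivAt (fun τ' : ℝ => Wbar * (1 + τ' * ε * s) / (1 + ε))
          (Wbar * (ε * s) / (1 + ε)) τ := by
        have : HasDerivAt (fun τ' : ℝ => 1 + τ' * ε * s) (ε * s) τ := by
          have := ((hasDerivAt_id τ).mul_const (ε * s)).const_add 1
          simpa [mul_assoc] using this
        simpa [mul_div_assoc] using ((this.const_mul Wbar).div_const (1 + ε))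
      have := h1.mul h2
      refine this.congr_deriv ?_
      rw [hsub]
      field_simp
      ring
    · apply div_neg_of_neg_of_pos _ hpos
      simp only [neg_neg, Left.neg_neg_iff]
      positivity
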